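/- There exist universal constants c₁ > 0 and c₂ > 0 such that for all real numbers μ₁, μ₂ with 0 < μ₁ ≤ μ₂, the Kullback–Leibler divergence between the Poisson distribution with mean μ₁ and the Poisson distribution with mean μ₂ satisfies c₁·d(μ₁,μ₂) ≤ KL(Poisson(μ₁), Poisson(μ₂)) ≤ c₂·d(μ₁,μ₂), where d(μ₁,μ₂) := (μ₂ − μ₁)²/μ₂. -/

import Mathlib

open Real

/-- The probability mass function of the Poisson distribution with mean `μ`:
`P[N = n] = e^{-μ} μⁿ / n!`. -/
noncomputable def poissonPDF (μ : ℝ) (n : ℕ) : ℝ :=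
  Real.exp (-μ) * μ ^ n / (Nat.factorial n : ℝ)

/-- The Kullback–Leibler divergence `KL(Poisson(μ₁), Poisson(μ₂))`, written as the series
`∑ₙ p₁(n) · log (p₁(n)/p₂(n))` over the Poisson pmfs. -/
noncomputable def poissonKL (μ₁ μ₂ : ℝ) : ℝ :=
  ∑' n : ℕ, poissonPDF μ₁ n * Real.log (poissonPDF μ₁ n / poissonPDF μ₂ n)

section aux
open Nat

lemma tsum_exp_series (μ : ℝ) : ∑' n : ℕ, μ ^ n / (n ! : ℝ) = Real.exp μ := by
  rw [Real.exp_eq_exp_ℝ, NormedSpace.exp_eq_tsum_div]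

lemma summable_series (μ : ℝ) : Summable (fun n : ℕ => μ ^ n / (n ! : ℝ)) :=
  Real.summable_pow_div_factorial μ

lemma shift_eq (μ : ℝ) : (fun n : ℕ => ((n+1 : ℕ) : ℝ) * μ ^ (n+1) / ((n+1)! : ℝ))
    = fun n : ℕ => μ * (μ ^ n / (n ! : ℝ)) := by
  funext n
  rw [Nat.factorial_succ, pow_succ]
  push_cast
  have h1 : (n ! : ℝ) ≠ 0 := Nat.cast_ne_zero.mpr (Nat.factorial_ne_zero n)
  have h2 : ((n : ℝ) + 1) ≠ 0 := by positivity
  field_simp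

lemma summable_nseries (μ : ℝ) : Summable (fun n : ℕ => (n : ℝ) * μ ^ n / (n ! : ℝ)) := by
  rw [← summable_nat_add_iff 1]
  have h := shift_eq μ
  exact h ▸ ((summable_series μ).mul_left μ)

lemma tsum_nseries (μ : ℝ) : ∑' n : ℕ, (n : ℝ) * μ ^ n / (n ! : ℝ) = μ * Real.exp μ := by
  rw [Summable.tsum_eq_zero_add (summable_nseries μ)]
  simp only [Nat.cast_zero, zero_mul, zero_div, zero_add]
  have h := shift_eq μ
  simp only [funext_iff] at h
  calc ∑' n : ℕ, ((n+1 : ℕ) : ℝ) * μ ^ (n+1) / ((n+1)! : ℝ)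
      = ∑' n : ℕ, μ * (μ ^ n / (n ! : ℝ)) := tsum_congr h
    _ = μ * Real.exp μ := by rw [tsum_mul_left, tsum_exp_series]

lemma poissonPDF_eq (μ : ℝ) (n : ℕ) : poissonPDF μ n = Real.exp (-μ) * (μ ^ n / (n ! : ℝ)) := by
  rw [poissonPDF, mul_div_assoc]

lemma summable_poissonPDF (μ : ℝ) : Summable (fun n => poissonPDF μ n) := by
  simp only [poissonPDF_eq]
  exact (summable_series μ).mul_left _

lemma tsum_poissonPDF (μ : ℝ) : ∑' n : ℕ, poissonPDF μ n = 1 := by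
  simp only [poissonPDF_eq]
  rw [tsum_mul_left, tsum_exp_series, ← Real.exp_add]
  simp

lemma summable_n_poissonPDF (μ : ℝ) : Summable (fun n : ℕ => (n : ℝ) * poissonPDF μ n) := by
  have : (fun n : ℕ => (n : ℝ) * poissonPDF μ n)
      = fun n : ℕ => Real.exp (-μ) * ((n : ℝ) * μ ^ n / (n ! : ℝ)) := by
    funext n; rw [poissonPDF_eq]; ring
  rw [this]
  exact (summable_nseries μ).mul_left _

lemma tsum_n_poissonPDF (μ : ℝ) : ∑' n : ℕ, (n : ℝ) * poissonPDF μ n = μ := by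
  have h : (fun n : ℕ => (n : ℝ) * poissonPDF μ n)
      = fun n : ℕ => Real.exp (-μ) * ((n : ℝ) * μ ^ n / (n ! : ℝ)) := by
    funext n; rw [poissonPDF_eq]; ring
  rw [h, tsum_mul_left, tsum_nseries, ← mul_assoc, mul_comm (Real.exp (-μ)) μ, mul_assoc,
    ← Real.exp_add]
  simp

lemma poissonPDF_pos {μ : ℝ} (hμ : 0 < μ) (n : ℕ) : 0 < poissonPDF μ n := by
  rw [poissonPDF]
  positivity

lemma poissonKL_eq {μ₁ μ₂ : ℝ} (h1 : 0 < μ₁) (h2 : 0 < μ₂) :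
    poissonKL μ₁ μ₂ = μ₂ - μ₁ - μ₁ * Real.log (μ₂ / μ₁) := by
  have key : ∀ n : ℕ, poissonPDF μ₁ n * Real.log (poissonPDF μ₁ n / poissonPDF μ₂ n)
      = (μ₂ - μ₁) * poissonPDF μ₁ n + Real.log (μ₁ / μ₂) * ((n : ℝ) * poissonPDF μ₁ n) := by
    intro n
    have hp1 := poissonPDF_pos h1 n
    have hp2 := poissonPDF_pos h2 n
    have hfact : (0 : ℝ) < (Nat.factorial n : ℝ) := by positivity
    have hlog : Real.log (poissonPDF μ₁ n / poissonPDF μ₂ n)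
        = (μ₂ - μ₁) + (n : ℝ) * Real.log (μ₁ / μ₂) := by
      rw [Real.log_div hp1.ne' hp2.ne']
      rw [poissonPDF, poissonPDF]
      rw [Real.log_div (by positivity) hfact.ne', Real.log_div (by positivity) hfact.ne',
        Real.log_mul (Real.exp_ne_zero _) (by positivity),
        Real.log_mul (Real.exp_ne_zero _) (by positivity),
        Real.log_exp, Real.log_exp, Real.log_pow, Real.log_pow,
        Real.log_div h1.ne' h2.ne']
      ring
    rw [hlog]; ring
  rw [poissonKL]
  calc ∑' n : ℕ, poissonPDF μ₁ n * Real.log (poissonPDF μ₁ n / poissonPDF μ₂ n)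
      = ∑' n : ℕ, ((μ₂ - μ₁) * poissonPDF μ₁ n
          + Real.log (μ₁ / μ₂) * ((n : ℝ) * poissonPDF μ₁ n)) := tsum_congr key
    _ = (μ₂ - μ₁) * (∑' n : ℕ, poissonPDF μ₁ n)
          + Real.log (μ₁ / μ₂) * (∑' n : ℕ, (n : ℝ) * poissonPDF μ₁ n) := by
        rw [Summable.tsum_add ((summable_poissonPDF μ₁).mul_left _)
          ((summable_n_poissonPDF μ₁).mul_left _), tsum_mul_left, tsum_mul_left]
    _ = μ₂ - μ₁ - μ₁ * Real.log (μ₂ / μ₁) := by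
        rw [tsum_poissonPDF, tsum_n_poissonPDF,
          Real.log_div h1.ne' h2.ne', Real.log_div h2.ne' h1.ne']
        ring

end aux

/-- There exist universal constants `c₁, c₂ > 0` such that for all `0 < μ₁ ≤ μ₂`,
`c₁·(μ₂−μ₁)²/μ₂ ≤ KL(Poisson(μ₁),Poisson(μ₂)) ≤ c₂·(μ₂−μ₁)²/μ₂`. -/
theorem poissonKL_div_comparable :
    ∃ c₁ c₂ : ℝ, 0 < c₁ ∧ 0 < c₂ ∧
      ∀ μ₁ μ₂ : ℝ, 0 < μ₁ → μ₁ ≤ μ₂ →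
        c₁ * ((μ₂ - μ₁) ^ 2 / μ₂) ≤ poissonKL μ₁ μ₂ ∧
        poissonKL μ₁ μ₂ ≤ c₂ * ((μ₂ - μ₁) ^ 2 / μ₂) := by
  refine ⟨1/2, 1, by norm_num, by norm_num, fun μ₁ μ₂ h1 hle => ?_⟩
  have h2 : 0 < μ₂ := lt_of_lt_of_le h1 hle
  rw [poissonKL_eq h1 h2]
  set L := Real.log (μ₂ / μ₁) with hL
  rcases eq_or_lt_of_le hle with heq | hlt
  · subst heq
    simp [hL, Real.log_div h1.ne' h1.ne']
  · have hx : 1 < μ₂ / μ₁ := (one_lt_div h1).mpr hlt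
    have hLpos : 0 < L := Real.log_pos hx
    -- upper bound: L ≥ (μ₂ - μ₁)/μ₂
    have hub : 1 - μ₁ / μ₂ ≤ L := by
      have := Real.log_le_sub_one_of_pos (div_pos h1 h2)
      have hinv : Real.log (μ₁ / μ₂) = -L := by
        rw [hL, ← Real.log_inv, inv_div]
      linarith [this, hinv ▸ this]
    -- lower bound: L ≤ (μ₂/μ₁ - μ₁/μ₂)/2
    have hlb : L ≤ (μ₂ / μ₁ - μ₁ / μ₂) / 2 := by
      have hs : Real.sinh L = (μ₂ / μ₁ - (μ₂ / μ₁)⁻¹) / 2 :=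
        Real.sinh_log (by positivity)
      have := (Real.self_lt_sinh_iff.mpr hLpos).le
      rw [hs, inv_div] at this
      exact this
    constructor
    · -- 1/2 * d ≤ KL
      rw [div_mul_eq_mul_div, one_mul, div_div, div_le_iff₀ (by positivity)]
      have h' : μ₁ * L ≤ μ₁ * ((μ₂ / μ₁ - μ₁ / μ₂) / 2) :=
        mul_le_mul_of_nonneg_left hlb h1.le
      have hexp : μ₁ * ((μ₂ / μ₁ - μ₁ / μ₂) / 2) * (2 * μ₂) = μ₂ ^ 2 - μ₁ ^ 2 := by
        field_simp
      nlinarith [mul_le_mul_of_nonneg_right h' (by positivity : (0:ℝ) ≤ 2 * μ₂)]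
    · -- KL ≤ d
      rw [one_mul, ← sub_nonneg]
      have h' : μ₁ * (1 - μ₁ / μ₂) ≤ μ₁ * L := mul_le_mul_of_nonneg_left hub h1.le
      have hexp : μ₁ * (1 - μ₁ / μ₂) = μ₁ * (μ₂ - μ₁) / μ₂ := by
        field_simp
      have key : (μ₂ - μ₁) ^ 2 / μ₂ - (μ₂ - μ₁ - μ₁ * (μ₂ - μ₁) / μ₂) = 0 := by
        field_simp; ring
      linarith [hexp ▸ h']
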